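/- For n ≥ 3, the spider Sp(2^[n]) with n legs of length 2 satisfies χ_lat(Sp(2^[n])) = 2 if 3 ≤ n ≤ 9 and χ_lat(Sp(2^[n])) = 3 if n ≥ 10. -/

import Mathlib

open Finset

variable {V : Type*} [Fintype V] [DecidableEq V]

/-- The weight of a vertex `u` under the total labeling given by vertex labels `fv`
and edge labels `fe` : `w(u) = f(u) + \sum_{e incident to u} f(e)`. -/
def latWeight (G : SimpleGraph V) [DecidableRel G.Adj]
    (fv : V → ℕ) (fe : Sym2 V → ℕ) (u : V) : ℕ :=
  fv u + ∑ v ∈ G.neighborFinset u, fe s(u, v)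

/-- `fv, fe` together form a bijection from `V(G) ∪ E(G)` onto `{1, …, p + q}`,
where `p` is the order and `q` is the size of `G`. -/
def IsTotalLabeling (G : SimpleGraph V) [DecidableRel G.Adj]
    (fv : V → ℕ) (fe : Sym2 V → ℕ) : Prop :=
  Set.BijOn (Sum.elim fv (fun e : G.edgeSet => fe (e : Sym2 V))) Set.univ
    (Set.Icc 1 (Fintype.card V + G.edgeFinset.card))

/-- A local antimagic total labeling of `G` : a bijective total labeling such that any two
adjacent vertices get distinct weights. -/
def IsLocalAntimagicTotal (G : SimpleGraph V) [DecidableRel G.Adj]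
    (fv : V → ℕ) (fe : Sym2 V → ℕ) : Prop :=
  IsTotalLabeling G fv fe ∧
    ∀ ⦃u v : V⦄, G.Adj u v → latWeight G fv fe u ≠ latWeight G fv fe v

/-- The local antimagic total chromatic number `χ_lat(G)` : the minimum number of distinct
vertex weights taken over all local antimagic total labelings of `G`. -/
noncomputable def chiLat (G : SimpleGraph V) [DecidableRel G.Adj] : ℕ :=
  sInf {c | ∃ fv fe, IsLocalAntimagicTotal G fv fe ∧
    (Finset.univ.image (latWeight G fv fe)).card = c}

instance {W : Type*} (r : W → W → Prop) [DecidableEq W] [DecidableRel r] :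
    DecidableRel (SimpleGraph.fromRel r).Adj :=
  fun a b => decidable_of_iff _ (SimpleGraph.fromRel_adj r a b).symm

/-- Adjacency for the spider `Sp(2^[n])` : the center `none` is adjacent to each middle
vertex `some (i, false)`, and `some (i, false)` is adjacent to the leaf `some (i, true)`. -/
def spider2R (n : ℕ) : Option (Fin n × Bool) → Option (Fin n × Bool) → Bool
  | none, some (_, false) => true
  | some (i, false), some (j, true) => decide (i = j)
  | _, _ => false

/-- The spider `Sp(2^[n])` with `n` legs of length `2`. -/
abbrev spider2 (n : ℕ) : SimpleGraph (Option (Fin n × Bool)) :=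
  SimpleGraph.fromRel (fun a b => spider2R n a b = true)

-- ===== new material =====
namespace Sp
variable {n : ℕ}

abbrev mid (i : Fin n) : Option (Fin n × Bool) := some (i, false)
abbrev leaf (i : Fin n) : Option (Fin n × Bool) := some (i, true)

lemma adj_iff {a b : Option (Fin n × Bool)} :
    (spider2 n).Adj a b ↔ ∃ i : Fin n,
      (a = none ∧ b = mid i) ∨ (b = none ∧ a = mid i) ∨
      (a = mid i ∧ b = leaf i) ∨ (b = mid i ∧ a = leaf i) := by
  rw [SimpleGraph.fromRel_adj]
  constructor
  · rintro ⟨hne, h | h⟩ <;>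
    · rcases a with _ | ⟨i, _ | _⟩ <;> rcases b with _ | ⟨j, _ | _⟩ <;>
        simp_all [spider2R] <;> exact ⟨i, by simp_all⟩
  · rintro ⟨i, h⟩
    rcases h with ⟨rfl, rfl⟩ | ⟨rfl, rfl⟩ | ⟨rfl, rfl⟩ | ⟨rfl, rfl⟩ <;>
      simp [spider2R]

lemma neighborFinset_none :
    (spider2 n).neighborFinset none = univ.image (fun i : Fin n => mid i) := by
  ext a
  simp only [SimpleGraph.mem_neighborFinset, adj_iff, mem_image, mem_univ, true_and]
  constructor
  · rintro ⟨i, h⟩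
    rcases h with ⟨-, rfl⟩ | ⟨-, h⟩ | ⟨h, -⟩ | ⟨-, h⟩
    · exact ⟨i, rfl⟩
    all_goals exact absurd h (by simp)
  · rintro ⟨i, rfl⟩; exact ⟨i, by simp⟩

lemma neighborFinset_mid (i : Fin n) :
    (spider2 n).neighborFinset (mid i) = {none, leaf i} := by
  ext a
  simp only [SimpleGraph.mem_neighborFinset, adj_iff, mem_insert, mem_singleton]
  constructor
  · rintro ⟨j, h⟩
    rcases h with ⟨h, -⟩ | ⟨rfl, h⟩ | ⟨h, rfl⟩ | ⟨h, h2⟩ <;> simp_all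
  · rintro (rfl | rfl)
    · exact ⟨i, Or.inr (Or.inl ⟨rfl, rfl⟩)⟩
    · exact ⟨i, Or.inr (Or.inr (Or.inl ⟨rfl, rfl⟩))⟩

lemma neighborFinset_leaf (i : Fin n) :
    (spider2 n).neighborFinset (leaf i) = {mid i} := by
  ext a
  simp only [SimpleGraph.mem_neighborFinset, adj_iff, mem_singleton]
  constructor
  · rintro ⟨j, h⟩
    rcases h with ⟨h, -⟩ | ⟨-, h⟩ | ⟨h, -⟩ | ⟨rfl, h⟩ <;> simp_all
  · rintro rfl; exact ⟨i, Or.inr (Or.inr (Or.inr ⟨rfl, rfl⟩))⟩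

/-- The canonical enumeration of edges. -/
def eF : Fin n × Bool → Sym2 (Option (Fin n × Bool))
  | (i, false) => s(none, mid i)
  | (i, true) => s(mid i, leaf i)

lemma eF_injective : Function.Injective (eF (n := n)) := by
  rintro ⟨i, bi⟩ ⟨j, bj⟩ h
  cases bi <;> cases bj <;> simp [eF, Sym2.eq_iff] at h <;> simp_all

lemma mem_edgeSet_iff {e : Sym2 (Option (Fin n × Bool))} :
    e ∈ (spider2 n).edgeSet ↔ ∃ p, e = eF p := by
  induction e using Sym2.ind with
  | _ a b =>
    rw [SimpleGraph.mem_edgeSet, adj_iff]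
    constructor
    · rintro ⟨i, h⟩
      rcases h with ⟨rfl, rfl⟩ | ⟨rfl, rfl⟩ | ⟨rfl, rfl⟩ | ⟨rfl, rfl⟩
      · exact ⟨(i, false), by simp [eF]⟩
      · exact ⟨(i, false), by simp [eF, Sym2.eq_swap]⟩
      · exact ⟨(i, true), by simp [eF]⟩
      · exact ⟨(i, true), by simp [eF, Sym2.eq_swap]⟩
    · rintro ⟨⟨i, bi⟩, h⟩
      cases bi <;> simp [eF, Sym2.eq_iff] at h <;>
        [exact ⟨i, by tauto⟩; exact ⟨i, by tauto⟩]

lemma edgeFinset_eq :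
    (spider2 n).edgeFinset = univ.image (eF (n := n)) := by
  ext e
  simp [SimpleGraph.mem_edgeFinset, ← SimpleGraph.mem_edgeSet, mem_edgeSet_iff, eq_comm]

lemma card_edgeFinset : (spider2 n).edgeFinset.card = 2 * n := by
  rw [edgeFinset_eq, card_image_of_injective _ eF_injective]
  simp [mul_comm]

lemma card_V : Fintype.card (Option (Fin n × Bool)) = 2 * n + 1 := by
  simp [mul_comm]

lemma weight_none (fv : Option (Fin n × Bool) → ℕ) (fe : _ → ℕ) :
    latWeight (spider2 n) fv fe none = fv none + ∑ i : Fin n, fe s(none, mid i) := by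
  rw [latWeight, neighborFinset_none, Finset.sum_image (fun i _ j _ h => by simpa using h)]

lemma weight_mid (fv : Option (Fin n × Bool) → ℕ) (fe : _ → ℕ) (i : Fin n) :
    latWeight (spider2 n) fv fe (mid i)
      = fv (mid i) + (fe s(none, mid i) + fe s(mid i, leaf i)) := by
  rw [latWeight, neighborFinset_mid, Finset.sum_insert (by simp), Finset.sum_singleton,
    Sym2.eq_swap]

lemma weight_leaf (fv : Option (Fin n × Bool) → ℕ) (fe : _ → ℕ) (i : Fin n) :
    latWeight (spider2 n) fv fe (leaf i) = fv (leaf i) + fe s(mid i, leaf i) := by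
  rw [latWeight, neighborFinset_leaf, Finset.sum_singleton, Sym2.eq_swap]

end Sp

-- ===== part 2 : lower bounds =====
namespace Sp

lemma adj_none_mid (n : ℕ) (i : Fin n) : (spider2 n).Adj none (mid i) :=
  adj_iff.mpr ⟨i, Or.inl ⟨rfl, rfl⟩⟩

lemma adj_mid_leaf (n : ℕ) (i : Fin n) : (spider2 n).Adj (mid i) (leaf i) :=
  adj_iff.mpr ⟨i, Or.inr (Or.inr (Or.inl ⟨rfl, rfl⟩))⟩

lemma triangle_le (S : Finset ℕ) (h : ∀ x ∈ S, 1 ≤ x) :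
    S.card * (S.card + 1) ≤ 2 * ∑ x ∈ S, x := by
  induction S using Finset.strongInduction with
  | _ S ih =>
    rcases S.eq_empty_or_nonempty with rfl | hS
    · simp
    · have hmS : S.max' hS ∈ S := S.max'_mem hS
      set m := S.max' hS with hm
      have hsub : S ⊆ Finset.Icc 1 m := fun x hx =>
        Finset.mem_Icc.mpr ⟨h x hx, S.le_max' x hx⟩
      have hcard : S.card ≤ m := by
        have := Finset.card_le_card hsub
        simpa [Nat.card_Icc] using this
      have hih := ih (S.erase m) (Finset.erase_ssubset hmS)
        (fun x hx => h x (Finset.mem_of_mem_erase hx))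
      have hsum : ∑ x ∈ S, x = m + ∑ x ∈ S.erase m, x :=
        (Finset.add_sum_erase _ id hmS).symm
      have hc : (S.erase m).card + 1 = S.card := by
        rw [Finset.card_erase_of_mem hmS]
        have : 1 ≤ S.card := Finset.card_pos.mpr hS
        omega
      set k := (S.erase m).card with hk
      calc S.card * (S.card + 1) = k * (k+1) + 2*(k+1) := by rw [← hc]; ring
        _ ≤ 2 * ∑ x ∈ S.erase m, x + 2 * m := add_le_add hih (by omega)
        _ = 2 * ∑ x ∈ S, x := by rw [hsum]; ring

lemma two_mul_sum_Icc (m : ℕ) : 2 * ∑ x ∈ Finset.Icc 1 m, x = m * (m+1) := by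
  induction m with
  | zero => simp
  | succ m ih =>
    rw [Finset.sum_Icc_succ_top (by omega), mul_add, ih]
    ring

variable {n : ℕ} {fv : Option (Fin n × Bool) → ℕ}
  {fe : Sym2 (Option (Fin n × Bool)) → ℕ}

/-- The combined labeling function on the `4n+1` slots. -/
abbrev Lab (fv : Option (Fin n × Bool) → ℕ) (fe : Sym2 (Option (Fin n × Bool)) → ℕ) :
    Option (Fin n × Bool) ⊕ (Fin n × Bool) → ℕ :=
  Sum.elim fv (fun p => fe (eF p))

def θ (n : ℕ) : Option (Fin n × Bool) ⊕ (Fin n × Bool) →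
    Option (Fin n × Bool) ⊕ (spider2 n).edgeSet :=
  Sum.map id (fun p => ⟨eF p, mem_edgeSet_iff.mpr ⟨p, rfl⟩⟩)

lemma θ_bij : Function.Bijective (θ n) := by
  constructor
  · rintro (v | p) (w | q) h <;> simp [θ] at h ⊢
    · exact h
    · exact eF_injective h
  · rintro (v | ⟨e, he⟩)
    · exact ⟨Sum.inl v, rfl⟩
    · obtain ⟨p, rfl⟩ := mem_edgeSet_iff.mp he
      exact ⟨Sum.inr p, rfl⟩

lemma F_theta (d : Option (Fin n × Bool) ⊕ (Fin n × Bool)) :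
    Sum.elim fv (fun e : (spider2 n).edgeSet => fe (e : Sym2 _)) (θ n d) = Lab fv fe d := by
  rcases d with v | p <;> rfl

lemma bound_eq (n : ℕ) :
    Fintype.card (Option (Fin n × Bool)) + (spider2 n).edgeFinset.card = 4*n+1 := by
  rw [card_V, card_edgeFinset]; omega

lemma lab_inj (h : IsTotalLabeling (spider2 n) fv fe) : Function.Injective (Lab fv fe) := by
  intro d1 d2 hd
  have := h.injOn (Set.mem_univ (θ n d1)) (Set.mem_univ (θ n d2))
    (by rw [F_theta, F_theta]; exact hd)
  exact θ_bij.1 this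

lemma lab_mem (h : IsTotalLabeling (spider2 n) fv fe) (d) :
    Lab fv fe d ∈ Set.Icc 1 (4*n+1) := by
  have := h.mapsTo (Set.mem_univ (θ n d))
  rwa [F_theta, bound_eq] at this

lemma two_le_weights (hn : 0 < n) (h : IsLocalAntimagicTotal (spider2 n) fv fe) :
    2 ≤ (univ.image (latWeight (spider2 n) fv fe)).card :=
  Finset.one_lt_card.mpr ⟨_, mem_image_of_mem _ (mem_univ none), _,
    mem_image_of_mem _ (mem_univ (mid ⟨0, hn⟩)), h.2 (adj_none_mid n ⟨0, hn⟩)⟩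

def σmap (n : ℕ) : Fin n × Bool → Option (Fin n × Bool) ⊕ (Fin n × Bool)
  | (i, true) => Sum.inl (leaf i)
  | (i, false) => Sum.inr (i, true)

lemma σmap_inj : Function.Injective (σmap n) := by
  rintro ⟨i, bi⟩ ⟨j, bj⟩ h
  cases bi <;> cases bj <;> simp [σmap] at h <;> simp [h]

lemma three_le_weights (hn : 10 ≤ n) (h : IsLocalAntimagicTotal (spider2 n) fv fe) :
    3 ≤ (univ.image (latWeight (spider2 n) fv fe)).card := by
  by_contra hcon
  push_neg at hcon
  set w := latWeight (spider2 n) fv fe with hw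
  have hinj := lab_inj h.1
  have hmem := lab_mem h.1
  have hwl : ∀ i, w (leaf i) = w none := by
    intro i
    by_contra hne
    have h1 : w none ≠ w (mid i) := h.2 (adj_none_mid n i)
    have h2 : w (mid i) ≠ w (leaf i) := h.2 (adj_mid_leaf n i)
    have hsub : ({w none, w (mid i), w (leaf i)} : Finset ℕ) ⊆ univ.image w := by
      intro x hx
      simp only [mem_insert, mem_singleton] at hx
      rcases hx with rfl | rfl | rfl <;> exact mem_image_of_mem _ (mem_univ _)
    have hcard3 : ({w none, w (mid i), w (leaf i)} : Finset ℕ).card = 3 := by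
      rw [card_insert_of_notMem (by simp [h1, Ne.symm hne]),
        card_insert_of_notMem (by simp [h2]), card_singleton]
    have := Finset.card_le_card hsub
    omega
  set b := w none with hb
  -- lower bound for b
  have key1 : (n+1) * (n+2) ≤ 2 * b := by
    have ginj : Function.Injective (fun i : Fin n => fe (eF (i, false))) := by
      intro i j hij
      have := hinj (a₁ := Sum.inr (i, false)) (a₂ := Sum.inr (j, false)) hij
      simpa using this
    have hnotin : fv none ∉ univ.image (fun i : Fin n => fe (eF (i, false))) := by
      simp only [mem_image, mem_univ, true_and, not_exists]
      intro i hi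
      have := hinj (a₁ := Sum.inr (i, false)) (a₂ := Sum.inl none) hi
      simp at this
    set S : Finset ℕ := insert (fv none) (univ.image (fun i : Fin n => fe (eF (i, false))))
      with hS
    have hcardS : S.card = n + 1 := by
      rw [hS, card_insert_of_notMem hnotin, card_image_of_injective _ ginj, card_univ,
        Fintype.card_fin]
    have hsumS : ∑ x ∈ S, x = b := by
      rw [hS, Finset.sum_insert hnotin, Finset.sum_image (fun i _ j _ hij => ginj hij)]
      rw [hb, hw, weight_none]
      rfl
    have hpos : ∀ x ∈ S, 1 ≤ x := by
      intro x hx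
      rw [hS, mem_insert] at hx
      rcases hx with rfl | hx
      · exact (hmem (Sum.inl none)).1
      · simp only [mem_image, mem_univ, true_and] at hx
        obtain ⟨i, rfl⟩ := hx
        exact (hmem (Sum.inr (i, false))).1
    have := triangle_le S hpos
    rw [hcardS, hsumS] at this
    have e : (n+1)*(n+1+1) = (n+1)*(n+2) := by ring
    omega
  -- upper bound for n * b
  have key2 : 2 * (n * b) + (2*n+1) * (2*n+2) ≤ (4*n+1) * (4*n+2) := by
    set h' : Fin n × Bool → ℕ := Lab fv fe ∘ σmap n with hh'
    have h'inj : Function.Injective h' := hinj.comp σmap_inj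
    set A : Finset ℕ := univ.image h' with hA
    have hcardA : A.card = 2 * n := by
      rw [hA, card_image_of_injective _ h'inj, card_univ]
      simp [mul_comm]
    have hAsub : A ⊆ Finset.Icc 1 (4*n+1) := by
      intro x hx
      rw [hA, mem_image] at hx
      obtain ⟨p, -, rfl⟩ := hx
      exact Finset.mem_Icc.mpr (hmem (σmap n p))
    have hsumA : ∑ x ∈ A, x = n * b := by
      rw [hA, Finset.sum_image (fun p _ q _ hpq => h'inj hpq), Fintype.sum_prod_type]
      have : ∀ i : Fin n, ∑ c : Bool, h' (i, c) = b := by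
        intro i
        rw [Fintype.sum_bool]
        have : h' (i, true) + h' (i, false) = w (leaf i) := by
          rw [hw, weight_leaf]
          rfl
        rw [this, hwl]
      rw [Finset.sum_congr rfl (fun i _ => this i)]
      simp [mul_comm]
    have hsd := Finset.sum_sdiff (f := id) hAsub
    have hcardsd : (Finset.Icc 1 (4*n+1) \ A).card = 2*n+1 := by
      rw [Finset.card_sdiff_of_subset hAsub, hcardA, Nat.card_Icc]
      omega
    have htri := triangle_le (Finset.Icc 1 (4*n+1) \ A)
      (fun x hx => (Finset.mem_Icc.mp (Finset.mem_sdiff.mp hx).1).1)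
    rw [hcardsd] at htri
    have hgauss := two_mul_sum_Icc (4*n+1)
    simp only [id] at hsd
    have e1 : (2*n+1)*(2*n+1+1) = (2*n+1)*(2*n+2) := by ring
    have e2 : (4*n+1)*(4*n+1+1) = (4*n+1)*(4*n+2) := by ring
    omega
  have key3 : n * ((n+1) * (n+2)) ≤ n * (2 * b) := Nat.mul_le_mul_left n key1
  nlinarith [key2, key3, hn, Nat.mul_le_mul_right (n*n) hn]

end Sp

-- ===== part 3 : constructions =====
namespace Sp
variable {n : ℕ}

def mkfv (X : ℕ) (U V : Fin n → ℕ) : Option (Fin n × Bool) → ℕ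
  | none => X
  | some (i, false) => U i
  | some (i, true) => V i

def mkg (E1 E2 : Fin n → ℕ) : Option (Fin n × Bool) → Option (Fin n × Bool) → ℕ
  | none, some (i, false) => E1 i
  | some (i, false), none => E1 i
  | some (i, false), some (j, true) => if i = j then E2 i else 0
  | some (i, true), some (j, false) => if j = i then E2 j else 0
  | _, _ => 0

lemma mkg_symm (E1 E2 : Fin n → ℕ) : ∀ a b, mkg E1 E2 a b = mkg E1 E2 b a := by
  rintro (_ | ⟨i, _ | _⟩) (_ | ⟨j, _ | _⟩) <;> simp [mkg] <;> split_ifs with h <;> simp_all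

def mkfe (E1 E2 : Fin n → ℕ) : Sym2 (Option (Fin n × Bool)) → ℕ :=
  Sym2.lift ⟨fun a b => mkg E1 E2 a b, mkg_symm E1 E2⟩

variable {X : ℕ} {U V E1 E2 : Fin n → ℕ}

@[simp] lemma mkfe_none_mid (i : Fin n) : mkfe E1 E2 s(none, mid i) = E1 i := by
  simp [mkfe, mkg]

@[simp] lemma mkfe_mid_leaf (i : Fin n) : mkfe E1 E2 s(mid i, leaf i) = E2 i := by
  simp [mkfe, mkg]

/-- The slot-labeling function determined by the tables. -/
def Φf (X : ℕ) (U V E1 E2 : Fin n → ℕ) : Option (Fin n × Bool) ⊕ (Fin n × Bool) → ℕ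
  | .inl none => X
  | .inl (some (i, false)) => U i
  | .inl (some (i, true)) => V i
  | .inr (i, false) => E1 i
  | .inr (i, true) => E2 i

lemma lab_eq_Φf : Lab (mkfv X U V) (mkfe E1 E2) = Φf X U V E1 E2 := by
  funext d
  rcases d with (_ | ⟨i, _ | _⟩) | ⟨i, _ | _⟩ <;> simp [Lab, mkfv, Φf, eF, mkfe, mkg]

theorem isTotal_of (hinj : Function.Injective (Φf X U V E1 E2))
    (him : univ.image (Φf X U V E1 E2) = Finset.Icc 1 (4*n+1)) :
    IsTotalLabeling (spider2 n) (mkfv X U V) (mkfe E1 E2) := by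
  rw [IsTotalLabeling, bound_eq n]
  have hlab : ∀ d, Sum.elim (mkfv X U V)
      (fun e : (spider2 n).edgeSet => mkfe E1 E2 (e : Sym2 _)) (θ n d)
      = Φf X U V E1 E2 d := fun d => by rw [F_theta, lab_eq_Φf]
  refine ⟨?_, ?_, ?_⟩
  · intro x _
    obtain ⟨d, rfl⟩ := θ_bij.2 x
    rw [hlab d]
    have : Φf X U V E1 E2 d ∈ univ.image (Φf X U V E1 E2) :=
      mem_image_of_mem _ (mem_univ d)
    rw [him, Finset.mem_Icc] at this
    exact Set.mem_Icc.mpr this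
  · intro x _ y _ hxy
    obtain ⟨d1, rfl⟩ := θ_bij.2 x
    obtain ⟨d2, rfl⟩ := θ_bij.2 y
    rw [hlab, hlab] at hxy
    rw [hinj hxy]
  · intro m hm
    have : m ∈ univ.image (Φf X U V E1 E2) := by
      rw [him]; exact Finset.mem_Icc.mpr (Set.mem_Icc.mp hm)
    obtain ⟨d, -, rfl⟩ := mem_image.mp this
    exact ⟨θ n d, Set.mem_univ _, hlab d⟩

lemma wt_none :
    latWeight (spider2 n) (mkfv X U V) (mkfe E1 E2) none = X + ∑ i, E1 i := by
  rw [weight_none]; simp [mkfv]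

lemma wt_mid (i : Fin n) :
    latWeight (spider2 n) (mkfv X U V) (mkfe E1 E2) (mid i) = U i + (E1 i + E2 i) := by
  rw [weight_mid]; simp [mkfv]

lemma wt_leaf (i : Fin n) :
    latWeight (spider2 n) (mkfv X U V) (mkfe E1 E2) (leaf i) = V i + E2 i := by
  rw [weight_leaf]; simp [mkfv]

theorem tables_lat {a b c : ℕ}
    (hinj : Function.Injective (Φf X U V E1 E2))
    (him : univ.image (Φf X U V E1 E2) = Finset.Icc 1 (4*n+1))
    (hU : ∀ i, U i + (E1 i + E2 i) = a) (hV : ∀ i, V i + E2 i = b)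
    (hX : X + ∑ i, E1 i = c) (hab : a ≠ b) (hac : a ≠ c) :
    IsLocalAntimagicTotal (spider2 n) (mkfv X U V) (mkfe E1 E2) ∧
      univ.image (latWeight (spider2 n) (mkfv X U V) (mkfe E1 E2)) ⊆ {a, b, c} := by
  refine ⟨⟨isTotal_of hinj him, ?_⟩, ?_⟩
  · intro u v huv
    rcases adj_iff.mp huv with ⟨i, ⟨rfl, rfl⟩ | ⟨rfl, rfl⟩ | ⟨rfl, rfl⟩ | ⟨rfl, rfl⟩⟩
    · rw [wt_none, wt_mid, hU i, hX]; exact fun h => hac h.symm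
    · rw [wt_none, wt_mid, hU i, hX]; exact hac
    · rw [wt_mid, wt_leaf, hU i, hV i]; exact hab
    · rw [wt_mid, wt_leaf, hU i, hV i]; exact fun h => hab h.symm
  · intro x hx
    obtain ⟨u, -, rfl⟩ := mem_image.mp hx
    rcases u with _ | ⟨i, _ | _⟩
    · rw [wt_none, hX]; simp
    · rw [wt_mid, hU i]; simp
    · rw [wt_leaf, hV i]; simp

lemma card_triple_le (a b c : ℕ) : ({a, b, c} : Finset ℕ).card ≤ 3 := by
  refine (card_insert_le _ _).trans ?_
  have := (card_insert_le b ({c} : Finset ℕ))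
  simp only [card_singleton] at this
  omega

theorem exists_card_le_three (hn : 1 ≤ n) :
    ∃ fv fe, IsLocalAntimagicTotal (spider2 n) fv fe ∧
      (univ.image (latWeight (spider2 n) fv fe)).card ≤ 3 := by
  set U : Fin n → ℕ := fun i => 3*n - i with hU
  set V : Fin n → ℕ := fun i => 2*n - 2*i with hV
  set E1 : Fin n → ℕ := fun i => 4*n - i with hE1
  set E2 : Fin n → ℕ := fun i => 2*(i : ℕ) + 1 with hE2
  have him : univ.image (Φf (4*n+1) U V E1 E2) = Finset.Icc 1 (4*n+1) := by
    apply Finset.Subset.antisymm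
    · intro x hx
      obtain ⟨d, -, rfl⟩ := mem_image.mp hx
      rcases d with (_ | ⟨i, _ | _⟩) | ⟨i, _ | _⟩ <;>
        · simp only [Φf, hU, hV, hE1, hE2, Finset.mem_Icc]
          first
          | omega
          | (have := i.isLt; omega)
    · intro m hm
      rw [Finset.mem_Icc] at hm
      by_cases hA : m = 4*n+1
      · exact mem_image.mpr ⟨.inl none, mem_univ _, by simp [Φf, hA]⟩
      by_cases hB : 3*n+1 ≤ m
      · refine mem_image.mpr ⟨.inr (⟨4*n - m, by omega⟩, false), mem_univ _, ?_⟩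
        simp only [Φf, hE1]
        omega
      by_cases hC : 2*n+1 ≤ m
      · refine mem_image.mpr ⟨.inl (some (⟨3*n - m, by omega⟩, false)), mem_univ _, ?_⟩
        simp only [Φf, hU]
        omega
      by_cases hD : m % 2 = 1
      · refine mem_image.mpr ⟨.inr (⟨(m-1)/2, by omega⟩, true), mem_univ _, ?_⟩
        simp only [Φf, hE2]
        omega
      · refine mem_image.mpr ⟨.inl (some (⟨(2*n - m)/2, by omega⟩, true)), mem_univ _, ?_⟩
        simp only [Φf, hV]
        omega
  have hinj : Function.Injective (Φf (4*n+1) U V E1 E2) := by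
    have hcard : (univ.image (Φf (4*n+1) U V E1 E2)).card = (univ : Finset (Option (Fin n × Bool) ⊕ (Fin n × Bool))).card := by
      rw [him, Nat.card_Icc, card_univ]
      simp [Fintype.card_sum, Fintype.card_prod]
      omega
    have := Finset.card_image_iff.mp hcard
    rw [Finset.coe_univ] at this
    exact Set.injOn_univ.mp this
  have htab := tables_lat (a := 7*n+1) (b := 2*n+1) (c := (4*n+1) + ∑ i, E1 i)
    hinj him
    (fun i => by have := i.isLt; simp only [hU, hE1, hE2]; omega)
    (fun i => by have := i.isLt; simp only [hV, hE2]; omega)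
    rfl (by omega) ?_
  · exact ⟨_, _, htab.1, (Finset.card_le_card htab.2).trans (card_triple_le _ _ _)⟩
  · -- a ≠ c
    have hlow : n * (3*n+1) ≤ ∑ i, E1 i := by
      have := Finset.card_nsmul_le_sum (univ : Finset (Fin n)) E1 (3*n+1)
        (fun i _ => by have := i.isLt; simp only [hE1]; omega)
      simpa [card_univ, smul_eq_mul] using this
    have h1 : 1 * (3*n+1) ≤ n * (3*n+1) := Nat.mul_le_mul_right _ hn
    omega

end Sp


-- ===== part 4 : assembly =====
namespace Sp

theorem chiLat_eq_two {n : ℕ} (hn0 : 0 < n)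
    (hex : ∃ fv fe, IsLocalAntimagicTotal (spider2 n) fv fe ∧
      (univ.image (latWeight (spider2 n) fv fe)).card ≤ 2) :
    chiLat (spider2 n) = 2 := by
  obtain ⟨fv, fe, hlat, hle⟩ := hex
  have h2 := two_le_weights hn0 hlat
  have hmem : 2 ∈ {c | ∃ fv fe, IsLocalAntimagicTotal (spider2 n) fv fe ∧
      (univ.image (latWeight (spider2 n) fv fe)).card = c} :=
    ⟨fv, fe, hlat, le_antisymm hle h2⟩
  refine le_antisymm (Nat.sInf_le hmem) (le_csInf ⟨2, hmem⟩ ?_)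
  rintro k ⟨fv', fe', hlat', rfl⟩
  exact two_le_weights hn0 hlat'

theorem chiLat_eq_three {n : ℕ} (hn10 : 10 ≤ n)
    (hex : ∃ fv fe, IsLocalAntimagicTotal (spider2 n) fv fe ∧
      (univ.image (latWeight (spider2 n) fv fe)).card ≤ 3) :
    chiLat (spider2 n) = 3 := by
  obtain ⟨fv, fe, hlat, hle⟩ := hex
  have h3 := three_le_weights hn10 hlat
  have hmem : 3 ∈ {c | ∃ fv fe, IsLocalAntimagicTotal (spider2 n) fv fe ∧
      (univ.image (latWeight (spider2 n) fv fe)).card = c} :=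
    ⟨fv, fe, hlat, le_antisymm hle h3⟩
  refine le_antisymm (Nat.sInf_le hmem) (le_csInf ⟨3, hmem⟩ ?_)
  rintro k ⟨fv', fe', hlat', rfl⟩
  exact three_le_weights hn10 hlat'

theorem small_case {n : ℕ} (X : ℕ) (U V E1 E2 : Fin n → ℕ) (a b : ℕ)
    (hinj : Function.Injective (Φf X U V E1 E2))
    (him : univ.image (Φf X U V E1 E2) = Finset.Icc 1 (4*n+1))
    (hU : ∀ i, U i + (E1 i + E2 i) = a) (hV : ∀ i, V i + E2 i = b)
    (hX : X + ∑ i, E1 i = b) (hab : a ≠ b) :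
    ∃ fv fe, IsLocalAntimagicTotal (spider2 n) fv fe ∧
      (univ.image (latWeight (spider2 n) fv fe)).card ≤ 2 := by
  have htab := tables_lat hinj him hU hV hX hab hab
  refine ⟨_, _, htab.1, (Finset.card_le_card htab.2).trans ?_⟩
  have he : ({a, b, b} : Finset ℕ) = {a, b} := by simp
  rw [he]
  exact (card_insert_le _ _).trans (by simp)

end Sp


/-- For `n ≥ 3`, `χ_lat(Sp(2^[n])) = 2` if `3 ≤ n ≤ 9` and `χ_lat(Sp(2^[n])) = 3`
if `n ≥ 10`. -/
theorem chiLat_spider2 (n : ℕ) (hn : 3 ≤ n) :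
    chiLat (spider2 n) = if n ≤ 9 then 2 else 3 := by
  by_cases h9 : n ≤ 9
  · rw [if_pos h9]
    interval_cases n
    · exact Sp.chiLat_eq_two (by norm_num)
        (Sp.small_case 2 ![10,12,13] ![6,5,3] ![7,4,1] ![8,9,11] 25 14
          (by decide) (by decide) (by decide) (by decide) (by decide) (by decide))
    · exact Sp.chiLat_eq_two (by norm_num)
        (Sp.small_case 2 ![17,13,16,12] ![14,11,10,4] ![6,7,3,1] ![5,8,9,15] 28 19
          (by decide) (by decide) (by decide) (by decide) (by decide) (by decide))
    · exact Sp.chiLat_eq_two (by norm_num)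
        (Sp.small_case 1 ![21,20,17,19,16] ![18,14,13,12,8] ![7,4,6,3,2] ![5,9,10,11,15] 33 23
          (by decide) (by decide) (by decide) (by decide) (by decide) (by decide))
    · exact Sp.chiLat_eq_two (by norm_num)
        (Sp.small_case 2 ![25,22,24,21,23,14] ![20,19,18,17,15,12] ![4,6,3,5,1,7]
          ![8,9,10,11,13,16] 37 28
          (by decide) (by decide) (by decide) (by decide) (by decide) (by decide))
    · exact Sp.chiLat_eq_two (by norm_num)
        (Sp.small_case 1 ![29,28,22,16,20,18,14] ![27,25,17,15,13,12,10] ![7,6,4,8,2,3,5]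
          ![9,11,19,21,23,24,26] 45 36
          (by decide) (by decide) (by decide) (by decide) (by decide) (by decide))
    · exact Sp.chiLat_eq_two (by norm_num)
        (Sp.small_case 9 ![25,11,10,24,20,21,22,23] ![33,13,14,30,29,28,27,26] ![7,1,3,5,8,6,4,2]
          ![12,32,31,15,16,17,18,19] 44 45
          (by decide) (by decide) (by decide) (by decide) (by decide) (by decide))
    · exact Sp.chiLat_eq_two (by norm_num)
        (Sp.small_case 6 ![28,13,27,14,12,11,17,15,16] ![37,19,35,21,22,23,31,30,29]
          ![4,1,3,2,5,7,9,10,8] ![18,36,20,34,33,32,24,25,26] 50 55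
          (by decide) (by decide) (by decide) (by decide) (by decide) (by decide))
  · rw [if_neg h9]
    exact Sp.chiLat_eq_three (by omega) (Sp.exists_card_le_three (by omega))
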